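/- Let (R, ⊕, ·) be a fully idempotent semihyperring and {ηᵢ}_{i ∈ I} an arbitrary family of fuzzy hyperideals of R. Then ⋃_{i ∈ I} O_{ηᵢ} = O_{Σ_{i ∈ I} ηᵢ}, where the sum Σ_{i ∈ I} ηᵢ is the fuzzy hyperideal defined by (Σᵢ ηᵢ)(x) = sup of min_{1 ≤ k ≤ p} η_{i_k}(x_k), the supremum taken over all p ≥ 1, indices i₁, …, iₚ ∈ I, and x₁, …, xₚ ∈ R with x ∈ x₁ ⊕ ⋯ ⊕ xₚ. -/
import Mathlib


/-- The unit interval `[0,1]` is a complete lattice. -/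
noncomputable instance : Fact ((0:ℝ) ≤ 1) := ⟨zero_le_one⟩

/-- A semihyperring `(R, ⊕, ·)`: a hyperoperation `hadd` (with nonempty values),
a binary multiplication `mul`, and an element `zero`, satisfying commutativity and
(extended) associativity of `⊕`, associativity of `·`, two-sided distributivity of
`·` over `⊕` (as sets), and `0 ⊕ x = {x}`, `0·x = 0 = x·0`. -/
class Semihyperring (R : Type*) where
  hadd : R → R → Set R
  mul : R → R → R
  zero : R
  hadd_nonempty : ∀ x y : R, (hadd x y).Nonempty
  hadd_comm : ∀ x y : R, hadd x y = hadd y x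
  hadd_assoc : ∀ x y z : R, (⋃ w ∈ hadd y z, hadd x w) = ⋃ w ∈ hadd x y, hadd w z
  mul_assoc : ∀ x y z : R, mul (mul x y) z = mul x (mul y z)
  left_distrib : ∀ x y z : R, (fun w => mul x w) '' hadd y z = hadd (mul x y) (mul x z)
  right_distrib : ∀ x y z : R, (fun w => mul w z) '' hadd x y = hadd (mul x z) (mul y z)
  zero_hadd : ∀ x : R, hadd zero x = {x}
  hadd_zero : ∀ x : R, hadd x zero = {x}
  zero_mul : ∀ x : R, mul zero x = zero
  mul_zero : ∀ x : R, mul x zero = zero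

namespace Semihyperring

variable {R : Type*} [Semihyperring R]

/-- The hyperoperation `⊕` extended to subsets: `A ⊕ B = ⋃ {a ⊕ b : a ∈ A, b ∈ B}`. -/
def haddSet (A B : Set R) : Set R := ⋃ a ∈ A, ⋃ b ∈ B, hadd a b

/-- The hypersum `x₁ ⊕ x₂ ⊕ ⋯ ⊕ xₚ` of a list of elements (the empty hypersum is `{0}`,
which is neutral since `0 ⊕ x = {x}`). -/
def hsumList : List R → Set R
  | [] => {zero}
  | x :: xs => haddSet {x} (hsumList xs)

/-- A (two-sided) hyperideal: a nonempty subset closed under `⊕` and under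
multiplication by arbitrary elements of `R` on both sides. -/
def IsHyperideal (I : Set R) : Prop :=
  I.Nonempty ∧ (∀ x ∈ I, ∀ y ∈ I, hadd x y ⊆ I) ∧
    (∀ r : R, ∀ x ∈ I, mul r x ∈ I ∧ mul x r ∈ I)

/-- A right hyperideal. -/
def IsRightHyperideal (I : Set R) : Prop :=
  I.Nonempty ∧ (∀ x ∈ I, ∀ y ∈ I, hadd x y ⊆ I) ∧ (∀ x ∈ I, ∀ r : R, mul x r ∈ I)

/-- A left hyperideal. -/
def IsLeftHyperideal (I : Set R) : Prop :=
  I.Nonempty ∧ (∀ x ∈ I, ∀ y ∈ I, hadd x y ⊆ I) ∧ (∀ x ∈ I, ∀ r : R, mul r x ∈ I)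

/-- The product of two subsets:
`AB = {x : x ∈ a₁b₁ ⊕ ⋯ ⊕ aₚbₚ for some p ≥ 1, aᵢ ∈ A, bᵢ ∈ B}`. -/
def setProd (A B : Set R) : Set R :=
  {x | ∃ l : List (R × R), l ≠ [] ∧ (∀ p ∈ l, p.1 ∈ A ∧ p.2 ∈ B) ∧
    x ∈ hsumList (l.map fun p => mul p.1 p.2)}

/-- `R` is fully idempotent if every hyperideal `I` satisfies `I² = I`. -/
def FullyIdempotent (R : Type*) [Semihyperring R] : Prop :=
  ∀ I : Set R, IsHyperideal I → setProd I I = I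

/-- `R` is (von Neumann) regular if every `x` satisfies `x = x·a·x` for some `a`. -/
def Regular (R : Type*) [Semihyperring R] : Prop :=
  ∀ x : R, ∃ a : R, x = mul (mul x a) x

/-- A fuzzy hyperideal of `R`: a function `μ : R → [0,1]` with
`inf {μ z : z ∈ x ⊕ y} ≥ min (μ x) (μ y)` and `μ (x·y) ≥ max (μ x) (μ y)`. -/
def IsFuzzyHyperideal (μ : R → unitInterval) : Prop :=
  (∀ x y : R, μ x ⊓ μ y ≤ ⨅ z ∈ hadd x y, μ z) ∧
  (∀ x y : R, μ x ⊔ μ y ≤ μ (mul x y))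

/-- A fuzzy right hyperideal: `inf {λ z : z ∈ x ⊕ y} ≥ min (λ x) (λ y)` and `λ (x·y) ≥ λ x`. -/
def IsFuzzyRightHyperideal (μ : R → unitInterval) : Prop :=
  (∀ x y : R, μ x ⊓ μ y ≤ ⨅ z ∈ hadd x y, μ z) ∧
  (∀ x y : R, μ x ≤ μ (mul x y))

/-- A fuzzy left hyperideal: `inf {λ z : z ∈ x ⊕ y} ≥ min (λ x) (λ y)` and `λ (x·y) ≥ λ y`. -/
def IsFuzzyLeftHyperideal (μ : R → unitInterval) : Prop :=
  (∀ x y : R, μ x ⊓ μ y ≤ ⨅ z ∈ hadd x y, μ z) ∧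
  (∀ x y : R, μ y ≤ μ (mul x y))

/-- The product `λμ` of fuzzy subsets:
`(λμ)(x) = ⋁ { ⋀_{1≤i≤p} (λ yᵢ ⊓ μ zᵢ) : p ≥ 1, x ∈ y₁z₁ ⊕ ⋯ ⊕ yₚzₚ }`. -/
noncomputable def fprod (lam mu : R → unitInterval) (x : R) : unitInterval :=
  sSup {t | ∃ l : List (R × R), l ≠ [] ∧
    x ∈ hsumList (l.map fun p => mul p.1 p.2) ∧
    t = ⨅ p ∈ l, lam p.1 ⊓ mu p.2}

/-- The sum `λ ⊕ μ` of fuzzy subsets: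
`(λ ⊕ μ)(x) = ⋁ { λ y ⊓ μ z : x ∈ y ⊕ z }`. -/
noncomputable def fsum (lam mu : R → unitInterval) (x : R) : unitInterval :=
  sSup {t | ∃ y z : R, x ∈ hadd y z ∧ t = lam y ⊓ mu z}

/-- The composition `λ ∘ μ` of fuzzy subsets:
`(λ ∘ μ)(x) = ⋁ { λ y ⊓ μ z : x = y·z }` (with `⋁ ∅ = 0`). -/
noncomputable def fcomp (lam mu : R → unitInterval) (x : R) : unitInterval :=
  sSup {t | ∃ y z : R, x = mul y z ∧ t = lam y ⊓ mu z}

/-- A fuzzy prime hyperideal: a fuzzy hyperideal `η` such that for all fuzzy hyperideals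
`λ, μ`, `λμ ≤ η` implies `λ ≤ η` or `μ ≤ η`. -/
def IsFuzzyPrimeHyperideal (η : R → unitInterval) : Prop :=
  IsFuzzyHyperideal η ∧ ∀ lam mu : R → unitInterval, IsFuzzyHyperideal lam →
    IsFuzzyHyperideal mu → fprod lam mu ≤ η → lam ≤ η ∨ mu ≤ η

/-- A fuzzy irreducible hyperideal: a fuzzy hyperideal `η` such that for all fuzzy
hyperideals `λ, μ`, `min (λ, μ) = η` (pointwise) implies `λ = η` or `μ = η`. -/
def IsFuzzyIrreducibleHyperideal (η : R → unitInterval) : Prop :=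
  IsFuzzyHyperideal η ∧ ∀ lam mu : R → unitInterval, IsFuzzyHyperideal lam →
    IsFuzzyHyperideal mu → lam ⊓ mu = η → lam = η ∨ mu = η

/-- `FP R`: the set of proper fuzzy prime hyperideals of `R`
(`η` is proper if it is not the constant function `1`). -/
def FP (R : Type*) [Semihyperring R] : Set (R → unitInterval) :=
  {η | IsFuzzyPrimeHyperideal η ∧ η ≠ fun _ => 1}

/-- `O λ = {μ ∈ FP R : λ ≰ μ}`. -/
def O (lam : R → unitInterval) : Set (R → unitInterval) :=
  {mu ∈ FP R | ¬ lam ≤ mu}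

/-- The sum `Σᵢ ηᵢ` of an arbitrary family of fuzzy subsets:
`(Σᵢ ηᵢ)(x) = ⋁ { ⋀_{1≤k≤p} η_{i_k} (x_k) : p ≥ 1, x ∈ x₁ ⊕ ⋯ ⊕ xₚ }`. -/
noncomputable def famSum {ι : Type*} (η : ι → R → unitInterval) (x : R) : unitInterval :=
  sSup {t | ∃ l : List (ι × R), l ≠ [] ∧ x ∈ hsumList (l.map Prod.snd) ∧
    t = ⨅ p ∈ l, η p.1 p.2}

end Semihyperring


section Aux
variable {α β L : Type*} [CompleteLattice L]

lemma iInf_list_cons (f : α → L) (a : α) (l : List α) :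
    ⨅ p ∈ (a :: l), f p = f a ⊓ ⨅ p ∈ l, f p := by
  simp [List.mem_cons, iInf_or, iInf_inf_eq, iInf_iInf_eq_left]

lemma iInf_list_nil (f : α → L) : ⨅ p ∈ ([] : List α), f p = ⊤ := by
  simp

lemma iInf_list_map (g : α → β) (f : β → L) (l : List α) :
    ⨅ q ∈ l.map g, f q = ⨅ p ∈ l, f (g p) := by
  induction l with
  | nil => simp
  | cons a l ih => rw [List.map_cons, iInf_list_cons, iInf_list_cons, ih]

lemma iInf_list_append (f : α → L) (l₁ l₂ : List α) :
    ⨅ p ∈ (l₁ ++ l₂), f p = (⨅ p ∈ l₁, f p) ⊓ ⨅ p ∈ l₂, f p := by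
  induction l₁ with
  | nil => simp
  | cons a l ih => rw [List.cons_append, iInf_list_cons, iInf_list_cons, ih, inf_assoc]

end Aux

section SH
open Semihyperring
variable {R : Type*} [Semihyperring R]

lemma mem_haddSet {A B : Set R} {x : R} :
    x ∈ haddSet A B ↔ ∃ a ∈ A, ∃ b ∈ B, x ∈ hadd a b := by
  simp [haddSet]

lemma haddSet_assoc' (A B C : Set R) :
    haddSet A (haddSet B C) = haddSet (haddSet A B) C := by
  ext x
  simp only [mem_haddSet]
  constructor
  · rintro ⟨a, ha, w, hw, hx⟩
    obtain ⟨b, hb, c, hc, hw⟩ := hw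
    have h1 : x ∈ ⋃ w ∈ hadd b c, hadd a w := Set.mem_biUnion hw hx
    rw [Semihyperring.hadd_assoc] at h1
    simp only [Set.mem_iUnion] at h1
    obtain ⟨w', hw', hx'⟩ := h1
    exact ⟨w', ⟨a, ha, b, hb, hw'⟩, c, hc, hx'⟩
  · rintro ⟨w, hw, c, hc, hx⟩
    obtain ⟨a, ha, b, hb, hw⟩ := hw
    have h1 : x ∈ ⋃ w ∈ hadd a b, hadd w c := Set.mem_biUnion hw hx
    rw [← Semihyperring.hadd_assoc] at h1
    simp only [Set.mem_iUnion] at h1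
    obtain ⟨w', hw', hx'⟩ := h1
    exact ⟨a, ha, w', ⟨b, hb, c, hc, hw'⟩, hx'⟩

lemma hsumList_cons' (a : R) (L : List R) :
    hsumList (a :: L) = ⋃ w ∈ hsumList L, hadd a w := by
  simp [hsumList, haddSet]

lemma hsumList_singleton (a : R) : hsumList [a] = {a} := by
  rw [hsumList_cons']
  simp [hsumList, Semihyperring.hadd_zero]

lemma hsumList_append' (A B : List R) :
    hsumList (A ++ B) = haddSet (hsumList A) (hsumList B) := by
  induction A with
  | nil =>
    simp [hsumList, haddSet, Semihyperring.zero_hadd]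
  | cons a A ih =>
    show hsumList (a :: (A ++ B)) = _
    rw [hsumList, ih, hsumList]
    exact haddSet_assoc' _ _ _

lemma image_hsumList (f : R → R) (hf0 : f Semihyperring.zero = Semihyperring.zero)
    (hf : ∀ a b : R, f '' hadd a b = hadd (f a) (f b)) (L : List R) :
    f '' hsumList L = hsumList (L.map f) := by
  induction L with
  | nil => simp [hsumList, hf0]
  | cons a L ih =>
    rw [List.map_cons, hsumList_cons', hsumList_cons', ← ih, Set.image_iUnion₂,
      Set.biUnion_image]
    exact Set.iUnion₂_congr fun w _ => hf a w

lemma biInf_le_of_mem_hsumList {μ : R → unitInterval} (hμ : IsFuzzyHyperideal μ) :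
    ∀ L : List R, L ≠ [] → ∀ x ∈ hsumList L, (⨅ a ∈ L, μ a) ≤ μ x := by
  intro L
  induction L with
  | nil => simp
  | cons a L ih =>
    intro _ x hx
    rw [hsumList_cons'] at hx
    simp only [Set.mem_iUnion] at hx
    obtain ⟨w, hw, hx⟩ := hx
    rcases L with _ | ⟨b, L⟩
    · simp only [hsumList, Set.mem_singleton_iff] at hw
      subst hw
      rw [Semihyperring.hadd_zero, Set.mem_singleton_iff] at hx
      subst hx
      rw [iInf_list_cons]
      simp only [iInf_list_nil, inf_top_eq]
      exact le_refl _
    · have h1 : μ a ⊓ μ w ≤ μ x := le_trans (hμ.1 a w) (iInf₂_le x hx)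
      calc ⨅ p ∈ a :: b :: L, μ p = μ a ⊓ ⨅ p ∈ b :: L, μ p := iInf_list_cons _ _ _
        _ ≤ μ a ⊓ μ w := inf_le_inf_left _ (ih (by simp) w hw)
        _ ≤ μ x := h1

end SH


open Semihyperring in
/-- in a fully idempotent semihyperring, for an arbitrary family `{ηᵢ}` of
fuzzy hyperideals, `Σᵢ ηᵢ` is a fuzzy hyperideal and `⋃ᵢ O (ηᵢ) = O (Σᵢ ηᵢ)`. -/
theorem iUnion_O_eq_O_famSum {R : Type*} [Semihyperring R] {ι : Type*}
    (h : FullyIdempotent R) (η : ι → R → unitInterval)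
    (hη : ∀ i, IsFuzzyHyperideal (η i)) :
    IsFuzzyHyperideal (famSum η) ∧ (⋃ i, O (η i)) = O (famSum η) := by
  clear h
  have hfs : IsFuzzyHyperideal (famSum η) := by
    constructor
    · intro x y
      refine le_iInf₂ fun z hz => ?_
      show famSum η x ⊓ famSum η y ≤ famSum η z
      rw [famSum, famSum, sSup_inf_sSup]
      refine iSup₂_le fun p hp => ?_
      obtain ⟨⟨l1, hl1ne, hl1mem, hl1eq⟩, l2, hl2ne, hl2mem, hl2eq⟩ := hp
      refine le_sSup ⟨l1 ++ l2, by simp [hl1ne], ?_, ?_⟩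
      · rw [List.map_append, hsumList_append']
        exact mem_haddSet.2 ⟨x, hl1mem, y, hl2mem, hz⟩
      · rw [hl1eq, hl2eq, iInf_list_append]
    · intro x y
      refine sup_le ?_ ?_
      · refine sSup_le fun t ht => ?_
        obtain ⟨l, hlne, hmem, rfl⟩ := ht
        have hle : (⨅ p ∈ l, η p.1 p.2)
            ≤ ⨅ q ∈ l.map (fun p => (p.1, mul p.2 y)), η q.1 q.2 := by
          rw [iInf_list_map]
          exact iInf₂_mono fun p _ => le_trans le_sup_left ((hη p.1).2 p.2 y)
        refine hle.trans (le_sSup ⟨l.map (fun p => (p.1, mul p.2 y)), by simp [hlne], ?_, rfl⟩)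
        have himg := image_hsumList (fun w => mul w y) (Semihyperring.zero_mul y)
          (fun a b => Semihyperring.right_distrib a b y) (l.map Prod.snd)
        have : mul x y ∈ (fun w => mul w y) '' hsumList (l.map Prod.snd) :=
          Set.mem_image_of_mem _ hmem
        rw [himg, List.map_map] at this
        rw [List.map_map]
        exact this
      · refine sSup_le fun t ht => ?_
        obtain ⟨l, hlne, hmem, rfl⟩ := ht
        have hle : (⨅ p ∈ l, η p.1 p.2)
            ≤ ⨅ q ∈ l.map (fun p => (p.1, mul x p.2)), η q.1 q.2 := by
          rw [iInf_list_map]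
          exact iInf₂_mono fun p _ => le_trans le_sup_right ((hη p.1).2 x p.2)
        refine hle.trans (le_sSup ⟨l.map (fun p => (p.1, mul x p.2)), by simp [hlne], ?_, rfl⟩)
        have himg := image_hsumList (fun w => mul x w) (Semihyperring.mul_zero x)
          (fun a b => Semihyperring.left_distrib x a b) (l.map Prod.snd)
        have : mul x y ∈ (fun w => mul x w) '' hsumList (l.map Prod.snd) :=
          Set.mem_image_of_mem _ hmem
        rw [himg, List.map_map] at this
        rw [List.map_map]
        exact this
  have hle_fam : ∀ i, η i ≤ famSum η := by
    intro i x
    refine le_sSup ⟨[(i, x)], by simp, ?_, ?_⟩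
    · rw [List.map_cons, List.map_nil, hsumList_singleton]
      rfl
    · rw [iInf_list_cons, iInf_list_nil, inf_top_eq]
  refine ⟨hfs, ?_⟩
  ext μ
  simp only [Set.mem_iUnion, O, FP, Set.mem_setOf_eq]
  constructor
  · rintro ⟨i, ⟨hμFP, hnle⟩⟩
    exact ⟨hμFP, fun hc => hnle ((hle_fam i).trans hc)⟩
  · rintro ⟨hμFP, hnle⟩
    by_contra hc
    apply hnle
    intro x
    refine sSup_le fun t ht => ?_
    obtain ⟨l, hlne, hmem, rfl⟩ := ht
    have hall : ∀ i, η i ≤ μ := fun i => not_not.1 (fun hn => hc ⟨i, hμFP, hn⟩)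
    have h1 : (⨅ p ∈ l, η p.1 p.2) ≤ ⨅ a ∈ l.map Prod.snd, μ a := by
      rw [iInf_list_map]
      exact iInf₂_mono fun p _ => (hall p.1) p.2
    exact h1.trans (biInf_le_of_mem_hsumList hμFP.1.1 _ (by simpa using hlne) x hmem)
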